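/- Let (Y, Σ, P) be a probability space, G a finite group, O a finite set, Φ : Y → Y measurable, and ψ : Y → ℂ^O measurable with each ψ_o and ψ_o ∘ Φ square-integrable with respect to P. Assume (A1) G acts measurably on Y from the left and freely on O from the right; (A2) ψ_o(g·y) = ψ_{o·g}(y) for all g, o, y; (A3) Φ(g·y) = g·Φ(y) for all g, y; (A4) the pushforward of P under y ↦ g·y equals P for all g ∈ G. If the loss ℓ(K) := ∫_Y ‖K ψ(y) − ψ(Φ(y))‖² dP(y) attains its minimum over ℂ^{O×O} at some matrix, then it attains its minimum at an equivariant matrix; in particular, if the minimizer is unique, it is equivariant. -/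

import Mathlib

open MeasureTheory
open scoped ENNReal

noncomputable def edmdLoss {Y O : Type*} [MeasurableSpace Y] [Fintype O]
    (P : Measure Y) (Φ : Y → Y) (ψ : Y → O → ℂ) (K : Matrix O O ℂ) : ℝ :=
  ∫ y, ∑ o : O, ‖K.mulVec (ψ y) o - ψ (Φ y) o‖ ^ 2 ∂P

lemma convexOn_norm_sq_complex : ConvexOn ℝ (Set.univ : Set ℂ) (fun z => ‖z‖ ^ 2) := by
  have himg : (norm : ℂ → ℝ) '' Set.univ = Set.Ici 0 := by
    ext t
    constructor
    · rintro ⟨z, -, rfl⟩; exact norm_nonneg z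
    · intro ht; exact ⟨(t : ℂ), trivial, by simpa using ht⟩
  have h : (fun z : ℂ => ‖z‖ ^ 2) = (fun t : ℝ => t ^ 2) ∘ (norm : ℂ → ℝ) := rfl
  rw [h]
  refine ConvexOn.comp ?_ convexOn_univ_norm ?_
  · rw [himg]; exact convexOn_pow 2
  · rw [himg]
    intro a ha b hb hab
    exact pow_le_pow_left₀ ha hab 2

section Aux

variable {Y : Type*} [MeasurableSpace Y] {P : Measure Y}
    {O : Type*} [Fintype O]
    {Φ : Y → Y} {ψ : Y → O → ℂ}

lemma edmd_integrand_measurable (hΦmeas : Measurable Φ)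
    (hψmeas : ∀ o, Measurable fun y => ψ y o) (K : Matrix O O ℂ) :
    Measurable fun y => ∑ o : O, ‖K.mulVec (ψ y) o - ψ (Φ y) o‖ ^ 2 := by
  apply Finset.measurable_sum
  intro o _
  have h1 : Measurable fun y => K.mulVec (ψ y) o := by
    simp only [Matrix.mulVec, dotProduct]
    exact Finset.measurable_sum _ fun o' _ => measurable_const.mul (hψmeas o')
  exact ((h1.sub ((hψmeas o).comp hΦmeas)).norm).pow_const 2

lemma edmd_term_memLp (hψL2 : ∀ o, MemLp (fun y => ψ y o) 2 P)
    (hψΦL2 : ∀ o, MemLp (fun y => ψ (Φ y) o) 2 P) (K : Matrix O O ℂ) (o : O) :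
    MemLp (fun y => K.mulVec (ψ y) o - ψ (Φ y) o) 2 P := by
  have h1 : MemLp (fun y => K.mulVec (ψ y) o) 2 P := by
    simp only [Matrix.mulVec, dotProduct]
    exact memLp_finset_sum _ fun o' _ => (hψL2 o').const_mul (K o o')
  exact h1.sub (hψΦL2 o)

lemma edmd_integrand_integrable
    (hψL2 : ∀ o, MemLp (fun y => ψ y o) 2 P)
    (hψΦL2 : ∀ o, MemLp (fun y => ψ (Φ y) o) 2 P) (K : Matrix O O ℂ) :
    Integrable (fun y => ∑ o : O, ‖K.mulVec (ψ y) o - ψ (Φ y) o‖ ^ 2) P := by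
  apply integrable_finset_sum
  intro o _
  have h := (edmd_term_memLp hψL2 hψΦL2 K o).integrable_norm_rpow
    (by norm_num) (by norm_num)
  have h2 : ((2 : ℝ≥0∞)).toReal = (2 : ℝ) := by norm_num
  rw [h2] at h
  simpa using h

end Aux

theorem stmt13 {Y : Type*} [MeasurableSpace Y] (P : Measure Y) [IsProbabilityMeasure P]
    {G : Type*} [Group G] [Fintype G]
    {O : Type*} [Fintype O]
    (actY : G → Y → Y)
    (hY1 : ∀ y, actY 1 y = y)
    (hY2 : ∀ g h y, actY g (actY h y) = actY (g * h) y)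
    (hYmeas : ∀ g, Measurable (actY g))
    (actO : O → G → O)
    (hO1 : ∀ o, actO o 1 = o)
    (hO2 : ∀ o g h, actO (actO o g) h = actO o (g * h))
    (hOfree : ∀ o g, actO o g = o → g = 1)
    (Φ : Y → Y) (hΦmeas : Measurable Φ)
    (ψ : Y → O → ℂ)
    (hψmeas : ∀ o, Measurable fun y => ψ y o)
    (hψL2 : ∀ o, MemLp (fun y => ψ y o) 2 P)
    (hψΦL2 : ∀ o, MemLp (fun y => ψ (Φ y) o) 2 P)
    (hA2 : ∀ g o y, ψ (actY g y) o = ψ y (actO o g))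
    (hA3 : ∀ g y, Φ (actY g y) = actY g (Φ y))
    (hA4 : ∀ g, Measure.map (actY g) P = P) :
    ((∃ K : Matrix O O ℂ, ∀ K₁ : Matrix O O ℂ, edmdLoss P Φ ψ K ≤ edmdLoss P Φ ψ K₁) →
      ∃ K' : Matrix O O ℂ,
        (∀ (g : G) (o o' : O), K' o o' = K' (actO o g) (actO o' g)) ∧
        ∀ K₁ : Matrix O O ℂ, edmdLoss P Φ ψ K' ≤ edmdLoss P Φ ψ K₁) ∧
    (∀ K : Matrix O O ℂ,
      (∀ K₁ : Matrix O O ℂ, edmdLoss P Φ ψ K ≤ edmdLoss P Φ ψ K₁) →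
      (∀ K₁ : Matrix O O ℂ,
        (∀ K₂ : Matrix O O ℂ, edmdLoss P Φ ψ K₁ ≤ edmdLoss P Φ ψ K₂) → K₁ = K) →
      ∀ (g : G) (o o' : O), K o o' = K (actO o g) (actO o' g)) := by
  classical
  -- integrand abbreviation
  set F : Matrix O O ℂ → Y → ℝ :=
    fun K y => ∑ o : O, ‖K.mulVec (ψ y) o - ψ (Φ y) o‖ ^ 2 with hF
  have hloss : ∀ K, edmdLoss P Φ ψ K = ∫ y, F K y ∂P := fun K => rfl
  -- the right action as a family of equivalences of O
  let e : G → O ≃ O := fun g =>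
    { toFun := fun o => actO o g
      invFun := fun o => actO o g⁻¹
      left_inv := fun o => by simp [hO2, hO1]
      right_inv := fun o => by simp [hO2, hO1] }
  -- the shifted matrix
  set Kg : G → Matrix O O ℂ → Matrix O O ℂ :=
    fun g K o o' => K (actO o g) (actO o' g) with hKg
  have hshift : ∀ g K y, F (Kg g K) (actY g y) = F K y := by
    intro g K y
    have hmv : ∀ o : O, (Kg g K).mulVec (ψ (actY g y)) o = K.mulVec (ψ y) (actO o g) := by
      intro o
      simp only [Matrix.mulVec, dotProduct, hKg]
      rw [← Equiv.sum_comp (e g) (fun u => K (actO o g) u * ψ y u)]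
      refine Finset.sum_congr rfl fun o' _ => ?_
      simp only [e, Equiv.coe_fn_mk, hA2]
    calc F (Kg g K) (actY g y)
        = ∑ o : O, ‖K.mulVec (ψ y) (actO o g) - ψ (Φ y) (actO o g)‖ ^ 2 := by
          refine Finset.sum_congr rfl fun o _ => ?_
          rw [hmv, hA3, hA2]
      _ = F K y :=
          Equiv.sum_comp (e g) fun v => ‖K.mulVec (ψ y) v - ψ (Φ y) v‖ ^ 2
  have hinv : ∀ g K, edmdLoss P Φ ψ (Kg g K) = edmdLoss P Φ ψ K := by
    intro g K
    rw [hloss, hloss]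
    have h1 : ∫ y, F (Kg g K) y ∂P = ∫ y, F (Kg g K) y ∂(Measure.map (actY g) P) := by
      rw [hA4]
    rw [h1, integral_map (hYmeas g).aemeasurable
      (edmd_integrand_measurable hΦmeas hψmeas _).aestronglyMeasurable]
    refine integral_congr_ae (Filter.Eventually.of_forall fun y => ?_)
    exact hshift g K y
  have hcard0 : (Fintype.card G : ℝ) ≠ 0 := by
    exact_mod_cast Fintype.card_ne_zero
  constructor
  · -- existence of equivariant minimizer
    rintro ⟨K, hK⟩
    set w : ℝ := (Fintype.card G : ℝ)⁻¹ with hw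
    have hw0 : 0 ≤ w := by positivity
    have hwsum : ∑ _g : G, w = 1 := by
      rw [Finset.sum_const, Finset.card_univ, nsmul_eq_mul, hw]
      field_simp
    set K' : Matrix O O ℂ := ((Fintype.card G : ℂ))⁻¹ • ∑ g : G, Kg g K with hK'
    refine ⟨K', ?_, ?_⟩
    · intro h o o'
      simp only [hK', Matrix.smul_apply, Matrix.sum_apply, smul_eq_mul]
      congr 1
      calc ∑ g : G, Kg g K o o'
          = ∑ g : G, Kg (h * g) K o o' :=
            (Equiv.sum_comp (Equiv.mulLeft h) (fun g => Kg g K o o')).symm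
        _ = ∑ g : G, Kg g K (actO o h) (actO o' h) := by
            refine Finset.sum_congr rfl fun g _ => ?_
            simp [hKg, hO2]
    · intro K₁
      refine le_trans ?_ (hK K₁)
      -- mulVec of the average
      have hK'mv : ∀ (v : O → ℂ) (o : O),
          K'.mulVec v o = ∑ g : G, (w : ℂ) * ((Kg g K).mulVec v o) := by
        intro v o
        simp only [hK', Matrix.mulVec, dotProduct, Matrix.smul_apply,
          Matrix.sum_apply, smul_eq_mul, Finset.sum_mul, Finset.mul_sum]
        rw [Finset.sum_comm]
        refine Finset.sum_congr rfl fun g _ => Finset.sum_congr rfl fun o' _ => ?_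
        rw [hw]
        push_cast
        ring
      have hpt : ∀ y, F K' y ≤ ∑ g : G, w * F (Kg g K) y := by
        intro y
        have hterm : ∀ o : O, ‖K'.mulVec (ψ y) o - ψ (Φ y) o‖ ^ 2 ≤
            ∑ g : G, w * ‖(Kg g K).mulVec (ψ y) o - ψ (Φ y) o‖ ^ 2 := by
          intro o
          set z : G → ℂ := fun g => (Kg g K).mulVec (ψ y) o - ψ (Φ y) o with hz
          have hzsum : ∑ g : G, w • z g = K'.mulVec (ψ y) o - ψ (Φ y) o := by
            simp only [hz, Complex.real_smul, mul_sub, Finset.sum_sub_distrib,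
              hK'mv]
            congr 1
            rw [Finset.sum_const, Finset.card_univ, nsmul_eq_mul, hw]
            push_cast
            field_simp
          have hJ := convexOn_norm_sq_complex.map_sum_le
            (t := Finset.univ) (w := fun _ : G => w) (p := z)
            (fun _ _ => hw0) hwsum (fun _ _ => Set.mem_univ _)
          rw [hzsum] at hJ
          exact hJ
        calc F K' y ≤ ∑ o : O, ∑ g : G, w * ‖(Kg g K).mulVec (ψ y) o - ψ (Φ y) o‖ ^ 2 :=
              Finset.sum_le_sum fun o _ => hterm o
          _ = ∑ g : G, w * F (Kg g K) y := by
              rw [Finset.sum_comm]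
              simp only [← Finset.mul_sum]
              rfl
      have hle : ∫ y, F K' y ∂P ≤ ∫ y, ∑ g : G, w * F (Kg g K) y ∂P := by
        refine integral_mono (edmd_integrand_integrable hψL2 hψΦL2 K')
          (integrable_finset_sum _ fun g _ =>
            ((edmd_integrand_integrable hψL2 hψΦL2 (Kg g K)).const_mul w)) hpt
      calc edmdLoss P Φ ψ K' ≤ ∫ y, ∑ g : G, w * F (Kg g K) y ∂P := by
            rw [hloss]; exact hle
        _ = ∑ g : G, w * edmdLoss P Φ ψ (Kg g K) := by
            rw [integral_finset_sum _ (fun g _ =>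
              ((edmd_integrand_integrable hψL2 hψΦL2 (Kg g K)).const_mul w))]
            refine Finset.sum_congr rfl fun g _ => ?_
            rw [integral_const_mul, hloss]
        _ = ∑ g : G, w * edmdLoss P Φ ψ K := by
            refine Finset.sum_congr rfl fun g _ => by rw [hinv]
        _ = edmdLoss P Φ ψ K := by
            rw [← Finset.sum_mul, hwsum, one_mul]
  · -- uniqueness implies equivariance
    intro K hmin huniq g o o'
    have h1 : Kg g K = K :=
      huniq _ (fun K₂ => by rw [hinv g K]; exact hmin K₂)
    exact (congrFun (congrFun h1 o) o').symm
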